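/- The integral of exp(-tan²(x)) over x from 0 to π/2 equals (eπ/2)·erfc(1). -/

import Mathlib

open Real MeasureTheory Set

lemma lemA {b : ℝ} (hb : 0 < b) : ∫ s in Ioi (0:ℝ), Real.exp (-(b * s)) = 1 / b := by
  have := integral_comp_mul_left_Ioi (fun y => Real.exp (-y)) 0 hb
  simp only [mul_zero] at this
  rw [this, integral_exp_neg_Ioi_zero]
  simp [one_div]

lemma tan_image : Real.tan '' Ico 0 (π/2) = Ici (0:ℝ) := by
  ext y
  constructor
  · rintro ⟨x, ⟨hx0, hx1⟩, rfl⟩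
    exact Real.tan_nonneg_of_nonneg_of_le_pi_div_two hx0 hx1.le
  · intro hy
    exact ⟨Real.arctan y, ⟨by rw [← Real.arctan_zero]; exact Real.arctan_strictMono.monotone hy, Real.arctan_lt_pi_div_two y⟩, Real.tan_arctan y⟩

lemma lemB : ∫ t in Ici (0:ℝ), Real.exp (-t^2) / (1 + t^2)
    = ∫ x in Ico 0 (π/2), Real.exp (-(Real.tan x)^2) := by
  have hderiv : ∀ x ∈ Ico 0 (π/2), HasDerivWithinAt Real.tan (1 + Real.tan x ^ 2) (Ico 0 (π/2)) x := by
    intro x ⟨hx0, hx1⟩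
    have hcos : Real.cos x ≠ 0 := by
      have := Real.cos_pos_of_mem_Ioo ⟨by linarith [Real.pi_pos], hx1⟩
      positivity
    have h := (Real.hasDerivAt_tan hcos).hasDerivWithinAt (s := Ico 0 (π/2))
    rwa [show 1 / Real.cos x ^ 2 = 1 + Real.tan x ^ 2 by
      rw [one_div, ← Real.inv_one_add_tan_sq hcos, inv_inv] ] at h
  have hinj : InjOn Real.tan (Ico 0 (π/2)) := by
    apply Real.injOn_tan.mono
    intro x ⟨hx0, hx1⟩
    exact ⟨by linarith [Real.pi_pos], hx1⟩
  have := integral_image_eq_integral_abs_deriv_smul measurableSet_Ico hderiv hinj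
    (fun t => Real.exp (-t^2) / (1 + t^2))
  rw [tan_image] at this
  rw [this]
  apply setIntegral_congr_fun measurableSet_Ico
  intro x hx
  have h1 : (0:ℝ) < 1 + Real.tan x ^ 2 := by positivity
  simp only [smul_eq_mul, abs_of_pos h1]
  field_simp

lemma lemC : ∫ t in Ioi (0:ℝ), Real.exp (-t^2) / (1 + t^2)
    = ∫ s in Ioi (0:ℝ), Real.exp (-s) * (Real.sqrt (π/(1+s)) / 2) := by
  set F : ℝ → ℝ → ℝ := fun t s => Real.exp (-t^2) * Real.exp (-((1+t^2)*s)) with hF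
  have hpt : ∀ t : ℝ, (0:ℝ) < 1 + t^2 := fun t => by positivity
  have hint_s : ∀ t : ℝ, IntegrableOn (fun s => F t s) (Ioi (0:ℝ)) := by
    intro t
    have h := (exp_neg_integrableOn_Ioi 0 (hpt t)).const_mul (Real.exp (-t^2))
    simpa only [hF, neg_mul, IntegrableOn] using h
  have hval_s : ∀ t : ℝ, ∫ s in Ioi (0:ℝ), F t s = Real.exp (-t^2) / (1 + t^2) := by
    intro t
    rw [hF]
    simp only []
    rw [MeasureTheory.integral_const_mul, lemA (hpt t)]
    ring
  have hcont : Continuous (Function.uncurry F) := by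
    apply Continuous.mul
    · exact (Real.continuous_exp.comp (continuous_fst.pow 2).neg)
    · exact Real.continuous_exp.comp
        (((continuous_const.add (continuous_fst.pow 2)).mul continuous_snd).neg)
  have hInt : Integrable (Function.uncurry F)
      ((volume.restrict (Ioi (0:ℝ))).prod (volume.restrict (Ioi (0:ℝ)))) := by
    rw [integrable_prod_iff hcont.aestronglyMeasurable]
    constructor
    · exact Filter.Eventually.of_forall fun t => hint_s t
    · have heq : (fun t => ∫ s in Ioi (0:ℝ), ‖Function.uncurry F (t, s)‖) = fun t => Real.exp (-t^2) / (1+t^2) := by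
        funext t
        have hnn : ∀ s, ‖F t s‖ = F t s := fun s => by
          rw [Real.norm_eq_abs, abs_of_nonneg]; positivity
        simp_rw [Function.uncurry, hnn]; exact hval_s t
      rw [heq]
      have hg : IntegrableOn (fun t : ℝ => Real.exp (-t^2)) (Ioi 0) := by
        have := (integrable_exp_neg_mul_sq (show (0:ℝ) < 1 by norm_num)).integrableOn
          (s := Ioi (0:ℝ))
        simpa using this
      apply Integrable.mono hg
      · exact (((Real.continuous_exp.comp ((continuous_pow 2).neg)).div
          (continuous_const.add (continuous_pow 2)) (fun t => (hpt t).ne'))).aestronglyMeasurable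
      · apply Filter.Eventually.of_forall
        intro t
        rw [Real.norm_eq_abs, Real.norm_eq_abs, abs_of_nonneg (by positivity),
          abs_of_nonneg (Real.exp_nonneg _)]
        rw [div_le_iff₀ (hpt t)]
        nlinarith [Real.exp_nonneg (-t^2), sq_nonneg t]
  rw [show (∫ t in Ioi (0:ℝ), Real.exp (-t^2)/(1+t^2)) = ∫ t in Ioi (0:ℝ), ∫ s in Ioi (0:ℝ), F t s
    from by simp_rw [hval_s]]
  rw [MeasureTheory.integral_integral_swap hInt]
  apply setIntegral_congr_fun measurableSet_Ioi
  intro s hs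
  have h1s : (0:ℝ) < 1 + s := by have : (0:ℝ) < s := hs; linarith
  have hFs : ∀ t, F t s = Real.exp (-s) * Real.exp (-(1+s)*t^2) := by
    intro t
    rw [hF]
    simp only []
    rw [← Real.exp_add, ← Real.exp_add]
    congr 1
    ring
  simp_rw [hFs]
  rw [MeasureTheory.integral_const_mul, integral_gaussian_Ioi]

lemma sq_sub_image : (fun u : ℝ => u^2 - 1) '' Ioi 1 = Ioi (0:ℝ) := by
  ext y
  constructor
  · rintro ⟨u, hu, rfl⟩
    have : (1:ℝ) < u := hu
    have : (0:ℝ) < u^2 - 1 := by nlinarith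
    exact this
  · intro hy
    have hy' : (0:ℝ) < y := hy
    refine ⟨Real.sqrt (1+y), ?_, ?_⟩
    · have : (1:ℝ) < Real.sqrt (1+y) := by
        nlinarith [Real.sq_sqrt (show (0:ℝ) ≤ 1+y by linarith), Real.sqrt_nonneg (1+y)]
      exact this
    · simp only []
      rw [Real.sq_sqrt (by linarith : (0:ℝ) ≤ 1 + y)]; ring

lemma lemD : ∫ s in Ioi (0:ℝ), Real.exp (-s) * (Real.sqrt (π/(1+s)) / 2)
    = Real.exp 1 * Real.sqrt π * ∫ u in Ioi (1:ℝ), Real.exp (-u^2) := by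
  have hderiv : ∀ u ∈ Ioi (1:ℝ), HasDerivWithinAt (fun u : ℝ => u^2 - 1) (2*u) (Ioi 1) u := by
    intro u _
    have := ((hasDerivAt_pow 2 u).sub_const 1).hasDerivWithinAt (s := Ioi (1:ℝ))
    simpa using this
  have hinj : InjOn (fun u : ℝ => u^2 - 1) (Ioi 1) := by
    intro x hx y hy h
    have hx1 : (1:ℝ) < x := hx
    have hy1 : (1:ℝ) < y := hy
    have h' : x^2 = y^2 := by have := h; simp only [] at this; linarith
    have h2 : (x - y) * (x + y) = 0 := by nlinarith [h']
    rcases mul_eq_zero.mp h2 with h3 | h3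
    · linarith
    · linarith
  have := integral_image_eq_integral_abs_deriv_smul measurableSet_Ioi hderiv hinj
    (fun s => Real.exp (-s) * (Real.sqrt (π/(1+s)) / 2))
  rw [sq_sub_image] at this
  rw [this, ← MeasureTheory.integral_const_mul]
  apply setIntegral_congr_fun measurableSet_Ioi
  intro u hu
  have hu1 : (1:ℝ) < u := hu
  have hu0 : (0:ℝ) < u := by linarith
  have h1 : (1:ℝ) + (u^2 - 1) = u^2 := by ring
  simp only []
  rw [smul_eq_mul, h1, abs_of_pos (by linarith : (0:ℝ) < 2*u)]
  rw [Real.sqrt_div Real.pi_pos.le, Real.sqrt_sq hu0.le]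
  rw [show Real.exp (-(u^2-1)) = Real.exp 1 * Real.exp (-u^2) from by
    rw [← Real.exp_add]; congr 1; ring]
  field_simp

noncomputable def erfc (x : ℝ) : ℝ := (2 / Real.sqrt π) * ∫ t in Set.Ioi x, Real.exp (-t ^ 2)

theorem stmt_2 :
    ∫ x in (0:ℝ)..(π / 2), Real.exp (-(Real.tan x) ^ 2)
      = (Real.exp 1 * π / 2) * erfc 1 := by
  rw [intervalIntegral.integral_of_le (by positivity : (0:ℝ) ≤ π/2)]
  rw [MeasureTheory.integral_Ioc_eq_integral_Ioo, ← MeasureTheory.integral_Ico_eq_integral_Ioo]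
  rw [← lemB, MeasureTheory.integral_Ici_eq_integral_Ioi, lemC, lemD, erfc]
  have h : (0:ℝ) < Real.sqrt π := Real.sqrt_pos.mpr Real.pi_pos
  have h2 : Real.sqrt π * Real.sqrt π = π := Real.mul_self_sqrt Real.pi_pos.le
  field_simp
  linear_combination (∫ (u : ℝ) in Ioi 1, Real.exp (-u ^ 2)) * h2
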